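/- Let t ∈ (0,1). Then ln(sin(πt)/(πt)) < ln(1 - t²) + t²(1 - π²/6). -/

import Mathlib

open Real Filter Finset Topology

theorem log_sinc_lt (t : ℝ) (ht : t ∈ Set.Ioo (0:ℝ) 1) :
    Real.log (Real.sin (Real.pi * t) / (Real.pi * t)) <
      Real.log (1 - t ^ 2) + t ^ 2 * (1 - Real.pi ^ 2 / 6) := by
  obtain ⟨ht0, ht1⟩ := ht
  have hs0 : 0 < t ^ 2 := by positivity
  have hs1 : t ^ 2 < 1 := by nlinarith
  -- each factor is positive
  have hfac : ∀ i : ℕ, 0 < 1 - t ^ 2 / ((i : ℝ) + 1) ^ 2 := by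
    intro i
    have h1 : (1:ℝ) ≤ ((i:ℝ)+1)^2 := by nlinarith [Nat.cast_nonneg (α := ℝ) i]
    have : t ^ 2 / ((i : ℝ) + 1) ^ 2 ≤ t ^ 2 := by
      apply div_le_self hs0.le h1
    linarith
  have hπt : 0 < Real.pi * t := by positivity
  -- product tends to sinc
  have hP : Tendsto (fun n : ℕ => ∏ j ∈ Finset.range n, ((1:ℝ) - t ^ 2 / ((j:ℝ) + 1) ^ 2))
      atTop (𝓝 (Real.sin (Real.pi * t) / (Real.pi * t))) := by
    have := (Real.tendsto_euler_sin_prod t).div_const (Real.pi * t)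
    simpa [mul_div_assoc, mul_div_cancel_left₀ _ hπt.ne'] using this
  have hsinc : 0 < Real.sin (Real.pi * t) / (Real.pi * t) := by
    apply div_pos _ hπt
    apply Real.sin_pos_of_pos_of_lt_pi hπt
    nlinarith [Real.pi_pos]
  -- log of product tends to log sinc
  have hlogP : Tendsto (fun n : ℕ => ∑ j ∈ Finset.range n,
      Real.log ((1:ℝ) - t ^ 2 / ((j:ℝ) + 1) ^ 2))
      atTop (𝓝 (Real.log (Real.sin (Real.pi * t) / (Real.pi * t)))) := by
    have hc := (Real.continuousAt_log hsinc.ne').tendsto.comp hP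
    refine hc.congr fun n => ?_
    rw [Function.comp_apply, Real.log_prod]
    intro i _; exact (hfac i).ne'
  -- Basel
  have hbasel : HasSum (fun n : ℕ => -(t ^ 2 / ((n:ℝ) + 1) ^ 2)) (-(t ^ 2 * (Real.pi ^ 2 / 6))) := by
    have h0 : HasSum (fun n : ℕ => (1:ℝ) / ((n:ℝ)) ^ 2) (Real.pi ^ 2 / 6) := hasSum_zeta_two
    have h1 : HasSum (fun n : ℕ => (1:ℝ) / ((n:ℝ) + 1) ^ 2) (Real.pi ^ 2 / 6) := by
      have := (hasSum_nat_add_iff' (f := fun n : ℕ => (1:ℝ) / ((n:ℝ)) ^ 2) 1).mpr h0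
      simpa using this
    have := (h1.mul_left (t ^ 2)).neg
    simpa [mul_one_div, neg_div, div_eq_mul_inv] using this
  -- strict gap at index 1
  set δ : ℝ := -(t ^ 2 / 4) - Real.log (1 - t ^ 2 / 4) with hδ
  clear_value δ
  have hδpos : 0 < δ := by
    have h := Real.log_lt_sub_one_of_pos (by nlinarith : (0:ℝ) < 1 - t ^ 2 / 4)
      (by nlinarith : (1:ℝ) - t ^ 2 / 4 ≠ 1)
    simp only [hδ]; linarith
  -- bound sequence tends to L
  have hL : Tendsto (fun n : ℕ => (∑ j ∈ Finset.range n, -(t ^ 2 / ((j:ℝ) + 1) ^ 2))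
      + (Real.log (1 - t ^ 2) + t ^ 2 - δ)) atTop
      (𝓝 (-(t ^ 2 * (Real.pi ^ 2 / 6)) + (Real.log (1 - t ^ 2) + t ^ 2 - δ))) :=
    hbasel.tendsto_sum_nat.add_const _
  -- eventual inequality
  have hkey : Real.log (Real.sin (Real.pi * t) / (Real.pi * t)) ≤
      -(t ^ 2 * (Real.pi ^ 2 / 6)) + (Real.log (1 - t ^ 2) + t ^ 2 - δ) := by
    refine le_of_tendsto_of_tendsto hlogP hL ?_
    filter_upwards [eventually_ge_atTop 2] with n hn
    · have hsplit : ∀ (f : ℕ → ℝ), ∑ j ∈ Finset.range n, f j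
          = f 0 + f 1 + ∑ j ∈ Finset.Ico 2 n, f j := by
        intro f
        rw [Finset.range_eq_Ico, ← Finset.sum_Ico_consecutive f (Nat.zero_le 2) hn]
        norm_num [Finset.sum_Ico_eq_sum_range, Finset.sum_range_succ]
      rw [hsplit, hsplit (fun j => -(t ^ 2 / ((j:ℝ) + 1) ^ 2))]
      have htail : ∑ j ∈ Finset.Ico 2 n, Real.log ((1:ℝ) - t ^ 2 / ((j:ℝ) + 1) ^ 2)
          ≤ ∑ j ∈ Finset.Ico 2 n, -(t ^ 2 / ((j:ℝ) + 1) ^ 2) := by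
        apply Finset.sum_le_sum
        intro i _
        have := Real.log_le_sub_one_of_pos (hfac i)
        linarith
      have h1' : Real.log ((1:ℝ) - t ^ 2 / (((1:ℕ):ℝ) + 1) ^ 2) = -(t ^ 2 / 4) - δ := by
        norm_num [hδ]
      push_cast at h1' ⊢
      norm_num at h1' ⊢
      have hneg : ∑ j ∈ Finset.Ico 2 n, -(t ^ 2 / ((j:ℝ) + 1) ^ 2)
          = -∑ j ∈ Finset.Ico 2 n, t ^ 2 / ((j:ℝ) + 1) ^ 2 := by
        rw [Finset.sum_neg_distrib]
      linarith [hneg]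
  have : Real.log (1 - t ^ 2) + t ^ 2 * (1 - Real.pi ^ 2 / 6)
      = -(t ^ 2 * (Real.pi ^ 2 / 6)) + (Real.log (1 - t ^ 2) + t ^ 2) := by ring
  linarith
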